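/- Let n be an even natural number and let j ≡ 2 (mod 4) with gcd(j/2, n/2) = 1. Then the sum over k from 0 to n/2 - 1 of sin((j-1)(2k+1)π/(2n))·sin((j+1)(2k+1)π/(2n)) / [sin²((2k+1)π/(2n))·sin²(j(2k+1)π/(2n))] equals n²/4. -/

import Mathlib

open Real Finset Complex


-- power sum of z k = exp((2k+1)πI/N): middle terms vanish
lemma Tmid (N M : ℕ) (hN : 0 < N) (hM : 0 < M) (hM2 : M < 2*N) (hMN : M ≠ N) :
    ∑ k ∈ Finset.range N, Complex.exp ((2*k+1) * (π:ℝ) * Complex.I / N) ^ M = 0 := by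
  have hNC : (N:ℂ) ≠ 0 := Nat.cast_ne_zero.mpr hN.ne'
  have h1 : ∀ k : ℕ, Complex.exp ((2*k+1) * (π:ℝ) * Complex.I / N) ^ M
      = Complex.exp ((π:ℝ) * M * Complex.I / N) * Complex.exp (2*(π:ℝ)*M*Complex.I/N) ^ k := by
    intro k
    rw [← Complex.exp_nat_mul, ← Complex.exp_nat_mul, ← Complex.exp_add]
    congr 1
    field_simp
    ring
  simp only [h1]
  rw [← Finset.mul_sum]
  have hζ : Complex.exp (2*(π:ℝ)*M*Complex.I/N) ≠ 1 := by
    intro h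
    rw [Complex.exp_eq_one_iff] at h
    obtain ⟨q, hq⟩ := h
    have hq' : (M:ℂ) = q * N := by
      have hne : (2*(π:ℂ)*Complex.I) ≠ 0 := by
        simp [Real.pi_ne_zero, Complex.I_ne_zero]
      refine mul_left_cancel₀ hne ?_
      field_simp at hq
      linear_combination (2*(π:ℂ)*Complex.I) * hq
    have : (M:ℤ) = q * N := by exact_mod_cast hq'
    have hNz : (0:ℤ) < N := by exact_mod_cast hN
    have hq1 : q = 1 := by nlinarith [this]
    rw [hq1] at this
    simp at this
    omega
  have hgeom := geom_sum_eq hζ N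
  rw [hgeom, ← Complex.exp_nat_mul]
  have : (N:ℂ) * (2*(π:ℝ)*M*Complex.I/N) = M * (2*(π:ℝ)*Complex.I) := by
    field_simp
  rw [this, Complex.exp_nat_mul, Complex.exp_two_pi_mul_I, one_pow]
  simp


lemma sum_csc_sq_complex (N : ℕ) (hN : 0 < N) :
    ∑ k ∈ Finset.range N, 1 / Complex.sin ((2*(k:ℂ)+1) * (π:ℝ) / (2*N)) ^ 2 = (N:ℂ)^2 := by
  have hNC : (N:ℂ) ≠ 0 := Nat.cast_ne_zero.mpr hN.ne'
  set z : ℕ → ℂ := fun k => Complex.exp ((2*k+1) * (π:ℝ) * Complex.I / N) with hz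
  have h0 : ∀ k, z k ≠ 0 := fun k => Complex.exp_ne_zero _
  have hzN : ∀ k, z k ^ N = -1 := by
    intro k
    rw [hz]
    simp only
    rw [← Complex.exp_nat_mul]
    have e1 : (N:ℂ) * ((2*k+1) * (π:ℝ) * Complex.I / N) = ((2*k+1 : ℕ):ℂ) * ((π:ℝ) * Complex.I) := by
      push_cast; field_simp
    rw [e1, Complex.exp_nat_mul, Complex.exp_pi_mul_I]
    exact Odd.neg_one_pow ⟨k, by ring⟩
  have hz1 : ∀ k, z k - 1 ≠ 0 := by
    intro k h
    have h' : z k = 1 := sub_eq_zero.mp h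
    have := hzN k
    rw [h', one_pow] at this
    norm_num at this
  set A : ℕ → ℂ := fun k => ∑ m ∈ Finset.range N, z k ^ m with hA
  have hAval : ∀ k, A k = -2 / (z k - 1) := by
    intro k
    rw [eq_div_iff (hz1 k), hA]
    simp only
    rw [geom_sum_mul, hzN k]
    ring
  -- sin squared formula
  have hsin : ∀ k : ℕ, Complex.sin ((2*(k:ℂ)+1) * (π:ℝ) / (2*N)) ^ 2
      = -(z k - 1)^2 / (4 * z k) := by
    intro k
    set θ : ℂ := (2*(k:ℂ)+1) * (π:ℝ) / (2*N) with hθ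
    have hw2 : Complex.exp (θ * Complex.I) ^ 2 = z k := by
      rw [sq, ← Complex.exp_add, hz]
      simp only
      congr 1
      rw [hθ]
      field_simp
      ring
    have hsin1 : Complex.sin θ = (Complex.exp (θ*Complex.I) - Complex.exp (-(θ*Complex.I))) / (2*Complex.I) := by
      have e2 : -(θ*Complex.I) = (-θ)*Complex.I := by ring
      rw [e2, Complex.exp_mul_I, Complex.exp_mul_I, Complex.sin_neg, Complex.cos_neg]
      field_simp
      ring
    rw [hsin1, Complex.exp_neg, ← hw2]
    have he : Complex.exp (θ*Complex.I) ≠ 0 := Complex.exp_ne_zero _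
    field_simp
    ring_nf
    simp [Complex.I_sq]
    ring
  have hterm : ∀ k : ℕ, 1 / Complex.sin ((2*(k:ℂ)+1) * (π:ℝ) / (2*N)) ^ 2 = 2 * A k - A k ^ 2 := by
    intro k
    have hAval' : A k * (z k - 1) = -2 := by
      rw [hA]
      simp only
      rw [geom_sum_mul, hzN k]
      ring
    have hX : -(z k - 1)^2 ≠ 0 := neg_ne_zero.mpr (pow_ne_zero 2 (hz1 k))
    rw [hsin k, one_div_div, div_eq_iff hX]
    linear_combination (-(A k * (z k - 1)) + 2 * z k) * hAval'
  simp only [hterm]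
  rw [Finset.sum_sub_distrib, ← Finset.mul_sum]
  -- sum of A
  have hSA : ∑ k ∈ Finset.range N, A k = N := by
    rw [hA]
    simp only
    rw [Finset.sum_comm]
    have : ∀ m ∈ Finset.range N, ∑ k ∈ Finset.range N, z k ^ m
        = if m = 0 then (N:ℂ) else 0 := by
      intro m hm
      rw [Finset.mem_range] at hm
      by_cases h : m = 0
      · simp [h]
      · rw [if_neg h]
        exact Tmid N m hN (Nat.pos_of_ne_zero h) (by omega) (by omega)
    rw [Finset.sum_congr rfl this]
    simp [hN.ne']
  -- sum of A^2
  have hSA2 : ∑ k ∈ Finset.range N, A k ^ 2 = 2*(N:ℂ) - (N:ℂ)^2 := by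
    have e1 : ∀ k, A k ^ 2 = ∑ m ∈ Finset.range N, ∑ m' ∈ Finset.range N, z k ^ (m + m') := by
      intro k
      rw [sq, hA]
      simp only
      rw [Finset.sum_mul_sum]
      simp_rw [pow_add]
    simp only [e1]
    rw [Finset.sum_comm]
    have e2 : ∀ m ∈ Finset.range N, ∑ k ∈ Finset.range N, ∑ m' ∈ Finset.range N, z k ^ (m + m')
        = if m = 0 then (N:ℂ) else -N := by
      intro m hm
      rw [Finset.mem_range] at hm
      rw [Finset.sum_comm]
      have inner : ∀ m' ∈ Finset.range N, ∑ k ∈ Finset.range N, z k ^ (m + m')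
          = if m + m' = 0 then (N:ℂ) else if m + m' = N then -N else 0 := by
        intro m' hm'
        rw [Finset.mem_range] at hm'
        by_cases h0' : m + m' = 0
        · simp [h0']
        · rw [if_neg h0']
          by_cases hN' : m + m' = N
          · rw [if_pos hN']
            have : ∀ k ∈ Finset.range N, z k ^ (m + m') = -1 := by
              intro k _; rw [hN']; exact hzN k
            rw [Finset.sum_congr rfl this]
            simp
          · rw [if_neg hN']
            exact Tmid N (m+m') hN (Nat.pos_of_ne_zero h0') (by omega) hN'
      rw [Finset.sum_congr rfl inner]
      by_cases h : m = 0
      · subst h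
        rw [if_pos rfl]
        have : ∀ m' ∈ Finset.range N, (if 0 + m' = 0 then (N:ℂ) else if 0 + m' = N then -N else 0)
            = if m' = 0 then (N:ℂ) else 0 := by
          intro m' hm'
          rw [Finset.mem_range] at hm'
          simp only [zero_add]
          by_cases h' : m' = 0
          · simp [h']
          · rw [if_neg h', if_neg h', if_neg (by omega)]
        rw [Finset.sum_congr rfl this]
        simp [hN.ne']
      · rw [if_neg h]
        have : ∀ m' ∈ Finset.range N, (if m + m' = 0 then (N:ℂ) else if m + m' = N then -N else 0)
            = if m' = N - m then (-N:ℂ) else 0 := by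
          intro m' hm'
          rw [Finset.mem_range] at hm'
          rw [if_neg (by omega)]
          by_cases h' : m' = N - m
          · rw [if_pos h', if_pos (by omega)]
          · rw [if_neg (by omega), if_neg h']
        rw [Finset.sum_congr rfl this, Finset.sum_ite_eq' (Finset.range N) (N - m) (fun _ => (-N:ℂ))]
        rw [if_pos (Finset.mem_range.mpr (by omega))]
    rw [Finset.sum_congr rfl e2]
    have hsp : ∀ m ∈ Finset.range N, (if m = 0 then (N:ℂ) else -N)
        = (if m = 0 then (2*(N:ℂ)) else 0) + (-N) := by
      intro m _
      by_cases h : m = 0 <;> simp [h] <;> ring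
    rw [Finset.sum_congr rfl hsp, Finset.sum_add_distrib]
    simp [Finset.sum_ite_eq' (Finset.range N) 0, Finset.mem_range.mpr hN]
    ring
  rw [hSA, hSA2]
  ring


lemma sum_csc_sq (N : ℕ) (hN : 0 < N) :
    ∑ k ∈ Finset.range N, 1 / Real.sin ((2*(k:ℝ)+1) * π / (2*N)) ^ 2 = (N:ℝ)^2 := by
  have := sum_csc_sq_complex N hN
  apply Complex.ofReal_injective
  push_cast [Complex.ofReal_sin]
  convert this using 2 with k

lemma sin_pos_aux (N k : ℕ) (hN : 0 < N) (hk : k < N) :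
    0 < Real.sin ((2*(k:ℝ)+1) * π / (2*N)) := by
  apply Real.sin_pos_of_pos_of_lt_pi
  · positivity
  · rw [div_lt_iff₀ (by positivity)]
    have h2 : ((2*k+1 : ℕ):ℝ) < ((2*N : ℕ):ℝ) := Nat.cast_lt.mpr (by omega)
    push_cast at h2
    nlinarith [Real.pi_pos]

lemma sin_sq_period (m a : ℕ) (hm : 0 < m) :
    Real.sin ((a:ℝ) * π / (2*m)) ^ 2 = Real.sin (((a % (2*m) : ℕ):ℝ) * π / (2*m)) ^ 2 := by
  have hdecomp : a = 2*m*(a/(2*m)) + a % (2*m) := (Nat.div_add_mod a (2*m)).symm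
  set q := a / (2*m) with hq
  set r := a % (2*m) with hr
  have hcast : (a:ℝ) = 2*m*q + r := by exact_mod_cast congrArg (Nat.cast : ℕ → ℝ) hdecomp
  have harg : (a:ℝ) * π / (2*m) = (r:ℝ) * π / (2*m) + (q:ℤ) * π := by
    rw [hcast]
    push_cast
    field_simp
    ring
  have hsq : ((-1:ℝ)^((q:ℤ)))^2 = 1 := by
    rcases Int.even_or_odd (q:ℤ) with he | ho
    · rw [he.neg_one_zpow]; norm_num
    · rw [ho.neg_one_zpow]; norm_num
  rw [harg, Real.sin_add_int_mul_pi, mul_pow, hsq, one_mul]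

lemma reindex (m c : ℕ) (hm : 0 < m) (hc : c % 2 = 1) (hco : Nat.Coprime c (2*m))
    (F : ℕ → ℝ) (hF : ∀ a, F a = F (a % (2*m))) :
    ∑ k ∈ Finset.range m, F (c * (2*k+1)) = ∑ k ∈ Finset.range m, F (2*k+1) := by
  obtain ⟨c', -, hcc'⟩ := Nat.exists_mul_mod_eq_one_of_coprime hco (by omega)
  have h2 : (2:ℕ) ∣ 2*m := ⟨m, rfl⟩
  have hc'odd : c' % 2 = 1 := by
    have h1 := Nat.mod_mod_of_dvd (c*c') h2
    rw [hcc'] at h1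
    rw [Nat.mul_mod, hc] at h1
    omega
  have hodd : ∀ (d x : ℕ), d % 2 = 1 → x % 2 = 1 → (d * x) % (2*m) % 2 = 1 := by
    intro d x hd hx
    rw [Nat.mod_mod_of_dvd _ h2, Nat.mul_mod, hd, hx]
  have key : ∀ (d d' : ℕ), d % 2 = 1 → (d * d') % (2*m) = 1 →
      ∀ k ∈ Finset.range m, (d' * (2 * ((d * (2*k+1)) % (2*m) / 2) + 1)) % (2*m) / 2 = k := by
    intro d d' hd hdd' k hk
    rw [Finset.mem_range] at hk
    have hr2 : (d * (2*k+1)) % (2*m) % 2 = 1 := hodd d (2*k+1) hd (by omega)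
    have hrec : 2 * ((d * (2*k+1)) % (2*m) / 2) + 1 = (d * (2*k+1)) % (2*m) := by omega
    rw [hrec]
    have e1 : (d' * ((d * (2*k+1)) % (2*m))) % (2*m) = (d * d' * (2*k+1)) % (2*m) := by
      conv_lhs => rw [Nat.mul_mod, Nat.mod_mod_of_dvd _ dvd_rfl, ← Nat.mul_mod]
      rw [show d' * (d * (2*k+1)) = d * d' * (2*k+1) from by ring]
    have e2 : (d * d' * (2*k+1)) % (2*m) = 2*k+1 := by
      rw [Nat.mul_mod, hdd', one_mul, Nat.mod_mod_of_dvd _ dvd_rfl,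
        Nat.mod_eq_of_lt (by omega)]
    rw [e1, e2]
    omega
  have hmem : ∀ (d : ℕ), d % 2 = 1 → ∀ k ∈ Finset.range m,
      (d * (2*k+1)) % (2*m) / 2 ∈ Finset.range m := by
    intro d hd k hk
    rw [Finset.mem_range]
    have h1 : (d * (2*k+1)) % (2*m) < 2*m := Nat.mod_lt _ (by omega)
    have h2' : (d * (2*k+1)) % (2*m) % 2 = 1 := hodd d (2*k+1) hd (by omega)
    omega
  refine Finset.sum_nbij' (fun k => (c * (2*k+1)) % (2*m) / 2)
    (fun k => (c' * (2*k+1)) % (2*m) / 2) (hmem c hc) (hmem c' hc'odd)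
    (key c c' hc hcc') (key c' c hc'odd (by rwa [Nat.mul_comm])) ?_
  intro k hk
  rw [hF (c * (2*k+1))]
  congr 1
  beta_reduce
  have h2' : (c * (2*k+1)) % (2*m) % 2 = 1 := hodd c (2*k+1) hc (by omega)
  omega


lemma sin_ne_zero_odd (m a : ℕ) (hm : 0 < m) (ha : a % 2 = 1) :
    Real.sin ((a:ℝ) * π / (2*m)) ≠ 0 := by
  intro h
  rw [Real.sin_eq_zero_iff] at h
  obtain ⟨q, hq⟩ := h
  have hm' : (m:ℝ) ≠ 0 := Nat.cast_ne_zero.mpr hm.ne'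
  have h2 : (q:ℝ) * (2*m) = a := by
    have hπ := Real.pi_ne_zero
    field_simp at hq
    apply mul_right_cancel₀ hπ
    linear_combination π * hq
  have h3 : (a:ℤ) = q * (2*m) := by exact_mod_cast h2.symm
  have h4 : (2:ℤ) ∣ (a:ℤ) := ⟨q * m, by linarith [h3]⟩
  have h5 : (2:ℕ) ∣ a := by exact_mod_cast h4
  omega

lemma term_eq (X Y : ℝ) (hX : Real.sin X ≠ 0) (hY : Real.sin Y ≠ 0) :
    Real.sin (X - Y) * Real.sin (X + Y) / (Real.sin Y ^ 2 * Real.sin X ^ 2)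
      = 1 / Real.sin Y ^ 2 - 1 / Real.sin X ^ 2 := by
  have h1 : Real.sin (X - Y) * Real.sin (X + Y) = Real.sin X ^2 - Real.sin Y ^2 := by
    rw [Real.sin_sub, Real.sin_add]
    linear_combination (Real.sin X)^2 * (Real.sin_sq_add_cos_sq Y)
      - (Real.sin Y)^2 * (Real.sin_sq_add_cos_sq X)
  rw [h1]
  field_simp

lemma halfS (m : ℕ) (hm : 0 < m) :
    ∑ k ∈ Finset.range m, 1 / Real.sin ((2*(k:ℝ)+1) * π / (2*(2*(m:ℝ)))) ^ 2
      = 2*(m:ℝ)^2 := by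
  have hfull := sum_csc_sq (2*m) (by omega)
  have hcast : ((2*m : ℕ):ℝ) = 2*(m:ℝ) := by push_cast; ring
  rw [hcast] at hfull
  set f : ℕ → ℝ := fun k => 1 / Real.sin ((2*(k:ℝ)+1) * π / (2*(2*(m:ℝ)))) ^ 2 with hf
  have hsplit : ∑ k ∈ Finset.range (2*m), f k
      = ∑ k ∈ Finset.range m, f k + ∑ k ∈ Finset.range m, f (m + k) := by
    have h1 : ∑ k ∈ Finset.range (2*m), f k
        = ∑ k ∈ Finset.Ico 0 m, f k + ∑ k ∈ Finset.Ico m (2*m), f k := by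
      rw [Finset.sum_Ico_consecutive f (Nat.zero_le m) (by omega), Finset.range_eq_Ico]
    have h2 : ∑ k ∈ Finset.Ico 0 m, f k = ∑ k ∈ Finset.range m, f k := by
      rw [Finset.range_eq_Ico]
    have h3 : ∑ k ∈ Finset.Ico m (2*m), f k = ∑ k ∈ Finset.range m, f (m+k) := by
      rw [Finset.sum_Ico_eq_sum_range, show 2*m - m = m from by omega]
    rw [h1, h2, h3]
  have hrefl : ∑ k ∈ Finset.range m, f (m + k) = ∑ k ∈ Finset.range m, f k := by
    rw [← Finset.sum_range_reflect (fun i => f (m + i)) m]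
    refine Finset.sum_congr rfl fun i hi => ?_
    rw [Finset.mem_range] at hi
    rw [hf]
    simp only
    congr 1
    have hc1 : ((m - 1 - i : ℕ):ℝ) = (m:ℝ) - 1 - i := by
      push_cast [Nat.cast_sub (by omega : i ≤ m - 1), Nat.cast_sub (by omega : 1 ≤ m)]
      ring
    push_cast [hc1]
    have hm' : (m:ℝ) ≠ 0 := Nat.cast_ne_zero.mpr hm.ne'
    rw [show (2*((m:ℝ) + ((m:ℝ) - 1 - i))+1) * π / (2*(2*(m:ℝ)))
        = π - (2*(i:ℝ)+1) * π / (2*(2*(m:ℝ))) from by field_simp; ring]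
    rw [Real.sin_pi_sub]
  rw [hsplit, hrefl] at hfull
  push_cast at hfull ⊢
  linarith

theorem stmt_1 (n j : ℕ) (hn : Even n) (hj : j % 4 = 2)
    (hco : Nat.gcd (j / 2) (n / 2) = 1) :
    ∑ k ∈ Finset.range (n / 2),
      (Real.sin (((j : ℝ) - 1) * (2 * k + 1) * π / (2 * n)) *
        Real.sin (((j : ℝ) + 1) * (2 * k + 1) * π / (2 * n))) /
        (Real.sin ((2 * k + 1) * π / (2 * n)) ^ 2 *
          Real.sin ((j : ℝ) * (2 * k + 1) * π / (2 * n)) ^ 2)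
      = (n : ℝ) ^ 2 / 4 := by
  obtain ⟨m, rfl⟩ : ∃ m, n = 2*m := by
    obtain ⟨m', hm'⟩ := hn
    exact ⟨m', by omega⟩
  obtain ⟨c, rfl⟩ : ∃ c, j = 2*c := ⟨j/2, by omega⟩
  have hc : c % 2 = 1 := by omega
  have hd2 : 2*m/2 = m := by omega
  have hd2' : 2*c/2 = c := by omega
  rw [hd2, hd2'] at hco
  rw [hd2]
  rcases Nat.eq_zero_or_pos m with rfl | hm
  · simp
  have hm' : (m:ℝ) ≠ 0 := Nat.cast_ne_zero.mpr hm.ne'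
  have hco2 : Nat.Coprime c (2*m) := by
    have h2 : Nat.Coprime c 2 := by
      exact Nat.coprime_two_right.mpr (Nat.odd_iff.mpr hc)
    exact Nat.Coprime.mul_right h2 hco
  have hsum2 : ∑ k ∈ Finset.range m,
      1 / Real.sin (((c*(2*k+1) : ℕ):ℝ) * π / (2*(m:ℝ))) ^ 2 = (m:ℝ)^2 := by
    have hF : ∀ a : ℕ, (fun a : ℕ => 1 / Real.sin ((a:ℝ) * π / (2*(m:ℝ))) ^ 2) a
        = (fun a : ℕ => 1 / Real.sin ((a:ℝ) * π / (2*(m:ℝ))) ^ 2) (a % (2*m)) := by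
      intro a
      simp only
      rw [sin_sq_period m a hm]
    have hre := reindex m c hm hc hco2 _ hF
    rw [hre]
    rw [← sum_csc_sq m hm]
    refine Finset.sum_congr rfl fun k hk => ?_
    congr 2
    push_cast
    ring
  calc ∑ k ∈ Finset.range m,
      (Real.sin (((2*c : ℕ) - 1 : ℝ) * (2 * k + 1) * π / (2 * ((2*m : ℕ):ℝ))) *
        Real.sin (((2*c : ℕ) + 1 : ℝ) * (2 * k + 1) * π / (2 * ((2*m : ℕ):ℝ)))) /
        (Real.sin ((2 * (k:ℝ) + 1) * π / (2 * ((2*m : ℕ):ℝ))) ^ 2 *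
          Real.sin (((2*c : ℕ) : ℝ) * (2 * k + 1) * π / (2 * ((2*m : ℕ):ℝ))) ^ 2)
      = ∑ k ∈ Finset.range m,
        (1 / Real.sin ((2*(k:ℝ)+1) * π / (2*(2*(m:ℝ)))) ^ 2
          - 1 / Real.sin (((c*(2*k+1) : ℕ):ℝ) * π / (2*(m:ℝ))) ^ 2) := by
        refine Finset.sum_congr rfl fun k hk => ?_
        rw [Finset.mem_range] at hk
        have e0 : (2 * (k:ℝ) + 1) * π / (2 * ((2*m : ℕ):ℝ))
            = (2*(k:ℝ)+1) * π / (2*(2*(m:ℝ))) := by push_cast; ring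
        have e1 : (((2*c : ℕ)) - 1 : ℝ) * (2 * k + 1) * π / (2 * ((2*m : ℕ):ℝ))
            = 2*(c:ℝ)*(2*(k:ℝ)+1)*π/(2*(2*(m:ℝ))) - (2*(k:ℝ)+1) * π / (2*(2*(m:ℝ))) := by
          push_cast; ring
        have e2 : (((2*c : ℕ)) + 1 : ℝ) * (2 * k + 1) * π / (2 * ((2*m : ℕ):ℝ))
            = 2*(c:ℝ)*(2*(k:ℝ)+1)*π/(2*(2*(m:ℝ))) + (2*(k:ℝ)+1) * π / (2*(2*(m:ℝ))) := by
          push_cast; ring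
        have e4 : ((2*c : ℕ) : ℝ) * (2 * k + 1) * π / (2 * ((2*m : ℕ):ℝ))
            = ((c*(2*k+1) : ℕ):ℝ) * π / (2*(m:ℝ)) := by
          push_cast; field_simp
        have e3 : ((2*c : ℕ) : ℝ) * (2 * k + 1) * π / (2 * ((2*m : ℕ):ℝ))
            = 2*(c:ℝ)*(2*(k:ℝ)+1)*π/(2*(2*(m:ℝ))) := by push_cast; ring
        have hY : Real.sin ((2*(k:ℝ)+1) * π / (2*(2*(m:ℝ)))) ≠ 0 := by
          have := sin_pos_aux (2*m) k (by omega) (by omega)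
          rw [e0] at this
          exact this.ne'
        have hX : Real.sin (2*(c:ℝ)*(2*(k:ℝ)+1)*π/(2*(2*(m:ℝ)))) ≠ 0 := by
          rw [← e3, e4]
          exact sin_ne_zero_odd m (c*(2*k+1)) hm (by rw [Nat.mul_mod, hc]; omega)
        rw [e0, e1, e2, e3, term_eq _ _ hX hY, ← e3, e4]
    _ = (((2*m:ℕ)) : ℝ) ^ 2 / 4 := by
        rw [Finset.sum_sub_distrib, halfS m hm, hsum2]
        push_cast
        ring
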